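/- In sequence form: let α ∈ [0,1], m ∈ ℕ, suppose Σ_k ⟨k⟩^{−2mα}|V̂(k)|² < ∞ and Σ_k ⟨k⟩^{2m}|û(k)|² < ∞, and suppose the sequence w(k) := |k|^{2m}û(k) + (V̂ * û)(k) is in ℓ²(ℤ). Then Σ_k ⟨k⟩^{2m(2−α)}|û(k)|² < ∞. -/

import Mathlib

/- STATEMENT 9 (regularity, sequence form): α ∈ [0,1], m ∈ ℕ,
Σ ⟨k⟩^{−2mα}|V̂(k)|² < ∞, Σ ⟨k⟩^{2m}|û(k)|² < ∞, and
w(k) = |k|^{2m}û(k) + (V̂*û)(k) ∈ ℓ²(ℤ) imply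
Σ ⟨k⟩^{2m(2−α)}|û(k)|² < ∞. -/

noncomputable section
open Complex

def conv (a b : ℤ → ℂ) (k : ℤ) : ℂ := ∑' j : ℤ, a (k - j) * b j

namespace RegAux

lemma one_le_L (k : ℤ) : (1:ℝ) ≤ 1 + |(k:ℝ)| := le_add_of_nonneg_right (abs_nonneg _)

lemma L_pos (k : ℤ) : (0:ℝ) < 1 + |(k:ℝ)| := lt_of_lt_of_le one_pos (one_le_L k)

lemma peetre_mul (k j : ℤ) :
    (1 + |((k - j : ℤ):ℝ)|) ≤ (1 + |(k:ℝ)|) * (1 + |(j:ℝ)|) := by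
  push_cast
  nlinarith [abs_nonneg (k:ℝ), abs_nonneg (j:ℝ), abs_sub (k:ℝ) (j:ℝ)]

lemma peetre_add (k j : ℤ) :
    (1 + |((k - j : ℤ):ℝ)|) ≤ (1 + |(k:ℝ)|) + (1 + |(j:ℝ)|) := by
  push_cast
  nlinarith [abs_sub (k:ℝ) (j:ℝ)]

lemma sumLinv : Summable fun j : ℤ => ((1 + |(j:ℝ)|)⁻¹) ^ 2 := by
  have hnat : Summable fun n : ℕ => (((n:ℝ) + 1)⁻¹) ^ 2 := by
    have h := (summable_nat_add_iff (f := fun n : ℕ => (((n:ℝ))⁻¹) ^ 2) 1).mpr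
      (by simpa [one_div] using summable_one_div_nat_pow.mpr (by norm_num : 1 < 2))
    simpa using h
  apply Summable.of_nat_of_neg <;> simpa [add_comm, abs_of_nonneg, Nat.cast_nonneg] using hnat

lemma summable_mul_sq {f g : ℤ → ℝ} (hf0 : ∀ i, 0 ≤ f i) (hg0 : ∀ i, 0 ≤ g i)
    (hf : Summable fun i => f i ^ 2) (hg : Summable fun i => g i ^ 2) :
    Summable fun i => f i * g i := by
  refine Summable.of_nonneg_of_le (fun i => mul_nonneg (hf0 i) (hg0 i)) (fun i => ?_)
    ((hf.add hg).mul_left (1/2))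
  nlinarith [sq_nonneg (f i - g i)]

lemma tsum_CS {f g : ℤ → ℝ} (hf0 : ∀ i, 0 ≤ f i) (hg0 : ∀ i, 0 ≤ g i)
    (hf : Summable fun i => f i ^ 2) (hg : Summable fun i => g i ^ 2) :
    (∑' i, f i * g i) ^ 2 ≤ (∑' i, f i ^ 2) * (∑' i, g i ^ 2) := by
  have hfg := summable_mul_sq hf0 hg0 hf hg
  have hF : 0 ≤ ∑' i, f i ^ 2 := tsum_nonneg fun i => sq_nonneg _
  have hG : 0 ≤ ∑' i, g i ^ 2 := tsum_nonneg fun i => sq_nonneg _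
  have h1 : (∑' i, f i * g i) ≤ Real.sqrt ((∑' i, f i ^ 2) * (∑' i, g i ^ 2)) := by
    refine Summable.tsum_le_of_sum_le hfg fun s => ?_
    have hcs := Finset.sum_mul_sq_le_sq_mul_sq s f g
    have hs : (∑ i ∈ s, f i * g i) ≤
        Real.sqrt ((∑ i ∈ s, f i ^ 2) * (∑ i ∈ s, g i ^ 2)) :=
      (Real.le_sqrt (Finset.sum_nonneg fun i _ => mul_nonneg (hf0 i) (hg0 i))
        (mul_nonneg (Finset.sum_nonneg fun i _ => sq_nonneg _)
          (Finset.sum_nonneg fun i _ => sq_nonneg _))).mpr hcs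
    refine hs.trans (Real.sqrt_le_sqrt ?_)
    exact mul_le_mul (Summable.sum_le_tsum s (fun i _ => sq_nonneg _) hf)
      (Summable.sum_le_tsum s (fun i _ => sq_nonneg _) hg)
      (Finset.sum_nonneg fun i _ => sq_nonneg _) hF
  have h0 : 0 ≤ ∑' i, f i * g i := tsum_nonneg fun i => mul_nonneg (hf0 i) (hg0 i)
  nlinarith [Real.sq_sqrt (mul_nonneg hF hG)]

lemma rpow_sq_comm {x : ℝ} (hx : 0 < x) (a : ℝ) : (x ^ a) ^ 2 = (x ^ 2) ^ a := by
  rw [← Real.rpow_natCast (x ^ a) 2, ← Real.rpow_natCast x 2, ← Real.rpow_mul hx.le,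
    ← Real.rpow_mul hx.le, mul_comm]

set_option maxHeartbeats 1000000 in
lemma g_sq_le (m : ℕ) (hm : 1 ≤ m) (α : ℝ) (hα0 : 0 ≤ α) (hα1 : α ≤ 1) (k j : ℤ) :
    ((1 + |((k - j : ℤ):ℝ)|) ^ ((m:ℝ) * α) * (1 + |(k:ℝ)|) ^ (-((m:ℝ) * α)) *
      (1 + |(j:ℝ)|) ^ (-(m:ℝ))) ^ 2
    ≤ 3 * (((1 + |(j:ℝ)|)⁻¹) ^ 2 + ((1 + |(k:ℝ)|)⁻¹) ^ 2) := by
  set I : ℝ := 1 + |((k - j : ℤ):ℝ)| with hI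
  set K : ℝ := 1 + |(k:ℝ)| with hK
  set J : ℝ := 1 + |(j:ℝ)| with hJ
  have hIpos : 0 < I := L_pos _
  have hKpos : 0 < K := L_pos _
  have hJpos : 0 < J := L_pos _
  have hm1 : (1:ℝ) ≤ m := by exact_mod_cast hm
  set u : ℝ := I * (K * J)⁻¹ with hu
  set v : ℝ := J⁻¹ with hv
  have hupos : 0 < u := mul_pos hIpos (inv_pos.mpr (mul_pos hKpos hJpos))
  have hvpos : 0 < v := inv_pos.mpr hJpos
  have hu1 : u ≤ 1 := by
    rw [hu]
    have h2 := peetre_mul k j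
    rw [← div_eq_mul_inv, div_le_one (mul_pos hKpos hJpos)]
    exact peetre_mul k j
  have hv1 : v ≤ 1 := by
    rw [hv]
    exact inv_le_one_of_one_le₀ (one_le_L j)
  have hexp : (m:ℝ) * α + (m:ℝ) * (1 - α) = (m:ℝ) := by ring
  have e1 : u ^ ((m:ℝ) * α) = I ^ ((m:ℝ) * α) * (K ^ (-((m:ℝ) * α)) * J ^ (-((m:ℝ) * α))) := by
    rw [hu, Real.mul_rpow hIpos.le (by positivity), Real.inv_rpow (by positivity),
      Real.mul_rpow hKpos.le hJpos.le, mul_inv, Real.rpow_neg hKpos.le, Real.rpow_neg hJpos.le]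
  have e2 : v ^ ((m:ℝ) * (1 - α)) = J ^ (-((m:ℝ) * (1 - α))) := by
    rw [hv, Real.inv_rpow hJpos.le, ← Real.rpow_neg hJpos.le]
  have e3 : J ^ (-((m:ℝ) * α)) * J ^ (-((m:ℝ) * (1 - α))) = J ^ (-(m:ℝ)) := by
    rw [← Real.rpow_add hJpos]
    norm_num
    ring_nf
    rw [Real.rpow_neg hJpos.le, Real.rpow_natCast, inv_pow]
  have hgid : u ^ ((m:ℝ) * α) * v ^ ((m:ℝ) * (1 - α))
      = I ^ ((m:ℝ) * α) * K ^ (-((m:ℝ) * α)) * J ^ (-(m:ℝ)) := by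
    rw [e1, e2, mul_assoc, mul_assoc, e3, ← mul_assoc]
  rw [← hgid]
  -- g^2 = (u^2)^(mα) * (v^2)^(m(1-α))
  have hsq : (u ^ ((m:ℝ) * α) * v ^ ((m:ℝ) * (1 - α))) ^ 2
      = (u ^ 2) ^ ((m:ℝ) * α) * (v ^ 2) ^ ((m:ℝ) * (1 - α)) := by
    rw [mul_pow, rpow_sq_comm hupos, rpow_sq_comm hvpos]
  rw [hsq]
  have hu2 : (u ^ 2) ^ ((m:ℝ) * α) ≤ (u ^ 2) ^ α :=
    Real.rpow_le_rpow_of_exponent_ge (by positivity) (by nlinarith) (by nlinarith)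
  have hv2 : (v ^ 2) ^ ((m:ℝ) * (1 - α)) ≤ (v ^ 2) ^ (1 - α) :=
    Real.rpow_le_rpow_of_exponent_ge (by positivity) (by nlinarith) (by nlinarith)
  have hAMGM : (u ^ 2) ^ α * (v ^ 2) ^ (1 - α) ≤ α * u ^ 2 + (1 - α) * v ^ 2 :=
    Real.geom_mean_le_arith_mean2_weighted hα0 (by linarith) (by positivity) (by positivity)
      (by ring)
  have husum : u ≤ J⁻¹ + K⁻¹ := by
    have expand : (J⁻¹ + K⁻¹) * (K * J) = K + J := by
      have h1 : K⁻¹ * K = 1 := inv_mul_cancel₀ hKpos.ne'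
      have h2 : J⁻¹ * J = 1 := inv_mul_cancel₀ hJpos.ne'
      linear_combination K * h2 + J * h1
    rw [hu, mul_inv_le_iff₀ (mul_pos hKpos hJpos), expand]
    exact peetre_add k j
  have hcalc : (u ^ 2) ^ ((m:ℝ) * α) * (v ^ 2) ^ ((m:ℝ) * (1 - α))
      ≤ α * u ^ 2 + (1 - α) * v ^ 2 := by
    calc (u ^ 2) ^ ((m:ℝ) * α) * (v ^ 2) ^ ((m:ℝ) * (1 - α))
        ≤ (u ^ 2) ^ α * (v ^ 2) ^ (1 - α) := by
          apply mul_le_mul hu2 hv2 (by positivity) (by positivity)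
    _ ≤ _ := hAMGM
  have hub : u ^ 2 ≤ 2 * ((J⁻¹) ^ 2 + (K⁻¹) ^ 2) := by
    nlinarith [husum, hupos.le, sq_nonneg (J⁻¹ - K⁻¹), inv_pos.mpr hKpos, inv_pos.mpr hJpos]
  have hvb : v ^ 2 = (J⁻¹) ^ 2 := by rw [hv]
  have hfin : α * u ^ 2 + (1 - α) * v ^ 2 ≤ u ^ 2 + v ^ 2 := by
    nlinarith [sq_nonneg u, sq_nonneg v]
  linarith [hcalc, hfin, hub, hvb, sq_nonneg (K⁻¹)]


lemma sq_rpow (x : ℝ) (hx : 0 < x) (a : ℝ) : (x ^ a) ^ 2 = x ^ (2 * a) := by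
  rw [← Real.rpow_natCast (x ^ a) 2, ← Real.rpow_mul hx.le, mul_comm]
  norm_num

lemma one_add_pow_le (x : ℝ) (hx : 0 ≤ x) (n : ℕ) : (1 + x) ^ n ≤ 2 ^ n * (1 + x ^ n) := by
  rcases le_total x 1 with h | h
  · calc (1 + x) ^ n ≤ 2 ^ n := pow_le_pow_left₀ (by linarith) (by linarith) n
      _ ≤ 2 ^ n * (1 + x ^ n) := le_mul_of_one_le_right (by positivity)
          (by nlinarith [pow_nonneg hx n])
  · calc (1 + x) ^ n ≤ (2 * x) ^ n := pow_le_pow_left₀ (by linarith) (by linarith) n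
      _ = 2 ^ n * x ^ n := mul_pow 2 x n
      _ ≤ 2 ^ n * (1 + x ^ n) := mul_le_mul_of_nonneg_left (by linarith) (by positivity)

def Aa (m : ℕ) (α : ℝ) (V : ℤ → ℂ) (i : ℤ) : ℝ := (1 + |(i:ℝ)|) ^ (-((m:ℝ) * α)) * ‖V i‖

def Bb (m : ℕ) (u : ℤ → ℂ) (j : ℤ) : ℝ := (1 + |(j:ℝ)|) ^ (m:ℝ) * ‖u j‖

def gg (m : ℕ) (α : ℝ) (k j : ℤ) : ℝ :=
  (1 + |((k - j : ℤ):ℝ)|) ^ ((m:ℝ) * α) * (1 + |(k:ℝ)|) ^ (-((m:ℝ) * α)) *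
    (1 + |(j:ℝ)|) ^ (-(m:ℝ))

lemma Aa_nonneg (m : ℕ) (α : ℝ) (V : ℤ → ℂ) (i : ℤ) : 0 ≤ Aa m α V i := by
  unfold Aa; positivity

lemma Bb_nonneg (m : ℕ) (u : ℤ → ℂ) (j : ℤ) : 0 ≤ Bb m u j := by
  unfold Bb; positivity

lemma gg_nonneg (m : ℕ) (α : ℝ) (k j : ℤ) : 0 ≤ gg m α k j := by
  unfold gg; positivity

lemma gg_le_one (m : ℕ) (hm : 1 ≤ m) (α : ℝ) (hα0 : 0 ≤ α) (hα1 : α ≤ 1) (k j : ℤ) :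
    gg m α k j ≤ 1 := by
  unfold gg
  set I : ℝ := 1 + |((k - j : ℤ):ℝ)| with hI
  set K : ℝ := 1 + |(k:ℝ)| with hK
  set J : ℝ := 1 + |(j:ℝ)| with hJ
  have hKpos : 0 < K := L_pos _
  have hJpos : 0 < J := L_pos _
  have hm1 : (1:ℝ) ≤ m := by exact_mod_cast hm
  have h1 : I ^ ((m:ℝ) * α) ≤ K ^ ((m:ℝ) * α) * J ^ ((m:ℝ) * α) := by
    rw [← Real.mul_rpow hKpos.le hJpos.le]
    exact Real.rpow_le_rpow (L_pos _).le (peetre_mul k j) (by positivity)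
  have c1 : K ^ ((m:ℝ) * α) * K ^ (-((m:ℝ) * α)) = 1 := by
    rw [← Real.rpow_add hKpos]; simp
  have c2 : J ^ ((m:ℝ) * α) * J ^ (-(m:ℝ)) = J ^ ((m:ℝ) * α - m) := by
    rw [← Real.rpow_add hJpos]; ring_nf
  have c3 : J ^ ((m:ℝ) * α - m) ≤ 1 :=
    Real.rpow_le_one_of_one_le_of_nonpos (one_le_L j) (by nlinarith)
  calc I ^ ((m:ℝ) * α) * K ^ (-((m:ℝ) * α)) * J ^ (-(m:ℝ))
      ≤ K ^ ((m:ℝ) * α) * J ^ ((m:ℝ) * α) * K ^ (-((m:ℝ) * α)) * J ^ (-(m:ℝ)) := by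
        exact mul_le_mul_of_nonneg_right
          (mul_le_mul_of_nonneg_right h1 (Real.rpow_nonneg hKpos.le _))
          (Real.rpow_nonneg hJpos.le (-(m:ℝ)))
    _ = (K ^ ((m:ℝ) * α) * K ^ (-((m:ℝ) * α))) * (J ^ ((m:ℝ) * α) * J ^ (-(m:ℝ))) := by ring
    _ = 1 * J ^ ((m:ℝ) * α - m) := by rw [c1, c2]
    _ ≤ 1 := by rw [one_mul]; exact c3

lemma eq1 (m : ℕ) (α : ℝ) (V u : ℤ → ℂ) (k j : ℤ) :
    (1 + |(k:ℝ)|) ^ (-((m:ℝ) * α)) * (‖V (k - j)‖ * ‖u j‖)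
      = Aa m α V (k - j) * gg m α k j * Bb m u j := by
  unfold Aa gg Bb
  have d1 : (1 + |((k - j : ℤ):ℝ)|) ^ (-((m:ℝ) * α)) * (1 + |((k - j : ℤ):ℝ)|) ^ ((m:ℝ) * α)
      = 1 := by rw [← Real.rpow_add (L_pos _)]; simp
  have d2 : (1 + |(j:ℝ)|) ^ (-(m:ℝ)) * (1 + |(j:ℝ)|) ^ (m:ℝ) = 1 := by
    rw [← Real.rpow_add (L_pos _)]; simp
  calc (1 + |(k:ℝ)|) ^ (-((m:ℝ) * α)) * (‖V (k - j)‖ * ‖u j‖)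
      = 1 * 1 * ((1 + |(k:ℝ)|) ^ (-((m:ℝ) * α)) * (‖V (k - j)‖ * ‖u j‖)) := by ring
    _ = ((1 + |((k - j : ℤ):ℝ)|) ^ (-((m:ℝ) * α)) * (1 + |((k - j : ℤ):ℝ)|) ^ ((m:ℝ) * α))
        * ((1 + |(j:ℝ)|) ^ (-(m:ℝ)) * (1 + |(j:ℝ)|) ^ (m:ℝ))
        * ((1 + |(k:ℝ)|) ^ (-((m:ℝ) * α)) * (‖V (k - j)‖ * ‖u j‖)) := by rw [d1, d2]
    _ = _ := by ring

set_option maxHeartbeats 1000000 in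
lemma conv_bound (m : ℕ) (hm : 1 ≤ m) (α : ℝ) (hα0 : 0 ≤ α) (hα1 : α ≤ 1)
    (V u : ℤ → ℂ) (hA : Summable fun i => Aa m α V i ^ 2)
    (hB : Summable fun j => Bb m u j ^ 2) (k : ℤ) :
    (1 + |(k:ℝ)|) ^ (-(2 * (m:ℝ) * α)) * ‖conv V u k‖ ^ 2
      ≤ (∑' j : ℤ, (Aa m α V (k - j) * gg m α k j) ^ 2) * (∑' j : ℤ, Bb m u j ^ 2) := by
  have hAk : Summable fun j : ℤ => Aa m α V (k - j) ^ 2 :=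
    ((Equiv.subLeft k).summable_iff (f := fun i : ℤ => Aa m α V i ^ 2)).mpr hA
  have hABk : Summable fun j : ℤ => Aa m α V (k - j) * Bb m u j :=
    summable_mul_sq (fun j => Aa_nonneg m α V _) (fun j => Bb_nonneg m u j) hAk hB
  have hc : (1 + |(k:ℝ)|) ^ ((m:ℝ) * α) * (1 + |(k:ℝ)|) ^ (-((m:ℝ) * α)) = 1 := by
    rw [← Real.rpow_add (L_pos k)]; simp
  have hAgB : ∀ j : ℤ, Aa m α V (k - j) * gg m α k j * Bb m u j
      ≤ Aa m α V (k - j) * Bb m u j := by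
    intro j
    have h := mul_le_mul_of_nonneg_right
      (mul_le_mul_of_nonneg_left (gg_le_one m hm α hα0 hα1 k j) (Aa_nonneg m α V (k - j)))
      (Bb_nonneg m u j)
    simpa using h
  have hVu : Summable fun j : ℤ => ‖V (k - j) * u j‖ := by
    refine Summable.of_nonneg_of_le (fun j => norm_nonneg _) (fun j => ?_)
      (hABk.mul_left ((1 + |(k:ℝ)|) ^ ((m:ℝ) * α)))
    rw [norm_mul]
    calc ‖V (k - j)‖ * ‖u j‖
        = (1 + |(k:ℝ)|) ^ ((m:ℝ) * α) *
          ((1 + |(k:ℝ)|) ^ (-((m:ℝ) * α)) * (‖V (k - j)‖ * ‖u j‖)) := by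
          rw [← mul_assoc, hc, one_mul]
      _ = (1 + |(k:ℝ)|) ^ ((m:ℝ) * α) * (Aa m α V (k - j) * gg m α k j * Bb m u j) := by
          rw [eq1 m α V u k j]
      _ ≤ (1 + |(k:ℝ)|) ^ ((m:ℝ) * α) * (Aa m α V (k - j) * Bb m u j) :=
          mul_le_mul_of_nonneg_left (hAgB j) (Real.rpow_nonneg (L_pos k).le _)
  have hconv : ‖conv V u k‖ ≤ ∑' j : ℤ, ‖V (k - j)‖ * ‖u j‖ := by
    have h := norm_tsum_le_tsum_norm hVu
    simpa [conv, norm_mul] using h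
  have key : (1 + |(k:ℝ)|) ^ (-((m:ℝ) * α)) * ‖conv V u k‖
      ≤ ∑' j : ℤ, (Aa m α V (k - j) * gg m α k j) * Bb m u j := by
    calc (1 + |(k:ℝ)|) ^ (-((m:ℝ) * α)) * ‖conv V u k‖
        ≤ (1 + |(k:ℝ)|) ^ (-((m:ℝ) * α)) * ∑' j : ℤ, ‖V (k - j)‖ * ‖u j‖ :=
          mul_le_mul_of_nonneg_left hconv (Real.rpow_nonneg (L_pos k).le _)
      _ = ∑' j : ℤ, (1 + |(k:ℝ)|) ^ (-((m:ℝ) * α)) * (‖V (k - j)‖ * ‖u j‖) :=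
          tsum_mul_left.symm
      _ = ∑' j : ℤ, (Aa m α V (k - j) * gg m α k j) * Bb m u j :=
          tsum_congr fun j => eq1 m α V u k j
  have hAg2 : Summable fun j : ℤ => (Aa m α V (k - j) * gg m α k j) ^ 2 := by
    refine Summable.of_nonneg_of_le (fun j => sq_nonneg _) (fun j => ?_) hAk
    have h1 := gg_le_one m hm α hα0 hα1 k j
    have h2 := gg_nonneg m α k j
    have hg2 : gg m α k j ^ 2 ≤ 1 := by nlinarith
    rw [mul_pow]
    have := mul_le_mul_of_nonneg_left hg2 (sq_nonneg (Aa m α V (k - j)))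
    simpa using this
  have hCS := tsum_CS (f := fun j : ℤ => Aa m α V (k - j) * gg m α k j)
    (g := fun j : ℤ => Bb m u j)
    (fun j => mul_nonneg (Aa_nonneg m α V _) (gg_nonneg m α k j))
    (fun j => Bb_nonneg m u j) hAg2 hB
  have hL : (1 + |(k:ℝ)|) ^ (-(2 * (m:ℝ) * α)) * ‖conv V u k‖ ^ 2
      = ((1 + |(k:ℝ)|) ^ (-((m:ℝ) * α)) * ‖conv V u k‖) ^ 2 := by
    rw [mul_pow, sq_rpow _ (L_pos k), show (2:ℝ) * -((m:ℝ) * α) = -(2 * (m:ℝ) * α) by ring]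
  rw [hL]
  calc ((1 + |(k:ℝ)|) ^ (-((m:ℝ) * α)) * ‖conv V u k‖) ^ 2
      ≤ (∑' j : ℤ, (Aa m α V (k - j) * gg m α k j) * Bb m u j) ^ 2 :=
        pow_le_pow_left₀ (by positivity) key 2
    _ ≤ _ := hCS

def eqv1 : ℤ × ℤ ≃ ℤ × ℤ :=
  ⟨fun p => (p.1 - p.2, p.2), fun p => (p.1 + p.2, p.2),
    fun p => by simp, fun p => by simp⟩

def eqv2 : ℤ × ℤ ≃ ℤ × ℤ :=
  ⟨fun p => (p.1 - p.2, p.1), fun q => (q.2, q.2 - q.1),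
    fun p => by simp, fun p => by simp⟩

set_option maxHeartbeats 1000000 in
lemma summable_F (m : ℕ) (hm : 1 ≤ m) (α : ℝ) (hα0 : 0 ≤ α) (hα1 : α ≤ 1)
    (V : ℤ → ℂ) (hA : Summable fun i => Aa m α V i ^ 2) :
    Summable fun k : ℤ => ∑' j : ℤ, (Aa m α V (k - j) * gg m α k j) ^ 2 := by
  set T : ℤ × ℤ → ℝ := fun p =>
    Aa m α V (p.1 - p.2) ^ 2 *
      (3 * (((1 + |(p.2:ℝ)|)⁻¹) ^ 2 + ((1 + |(p.1:ℝ)|)⁻¹) ^ 2)) with hT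
  have base1 : Summable fun x : ℤ × ℤ => Aa m α V x.1 ^ 2 * ((1 + |(x.2:ℝ)|)⁻¹) ^ 2 :=
    hA.mul_of_nonneg sumLinv (fun i => sq_nonneg _) (fun j => sq_nonneg _)
  have hT1 : Summable fun p : ℤ × ℤ => Aa m α V (p.1 - p.2) ^ 2 * ((1 + |(p.2:ℝ)|)⁻¹) ^ 2 :=
    (eqv1.summable_iff
      (f := fun x : ℤ × ℤ => Aa m α V x.1 ^ 2 * ((1 + |(x.2:ℝ)|)⁻¹) ^ 2)).mpr base1
  have hT2 : Summable fun p : ℤ × ℤ => Aa m α V (p.1 - p.2) ^ 2 * ((1 + |(p.1:ℝ)|)⁻¹) ^ 2 :=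
    (eqv2.summable_iff
      (f := fun x : ℤ × ℤ => Aa m α V x.1 ^ 2 * ((1 + |(x.2:ℝ)|)⁻¹) ^ 2)).mpr base1
  have hTsum : Summable T := by
    refine ((hT1.add hT2).mul_left 3).congr fun p => ?_
    simp only [hT]; ring
  have hT0 : ∀ p : ℤ × ℤ, 0 ≤ T p := fun p => by
    have := Aa_nonneg m α V (p.1 - p.2); positivity
  have hsl := (summable_prod_of_nonneg hT0).mp hTsum
  have hpt : ∀ (a b : ℤ), (Aa m α V (a - b) * gg m α a b) ^ 2 ≤ T (a, b) := by
    intro a b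
    rw [mul_pow]
    exact mul_le_mul_of_nonneg_left (g_sq_le m hm α hα0 hα1 a b) (sq_nonneg _)
  refine Summable.of_nonneg_of_le (fun k => tsum_nonneg fun j => sq_nonneg _)
    (fun k => ?_) hsl.2
  refine Summable.tsum_le_tsum (fun j => hpt k j) ?_ (hsl.1 k)
  exact Summable.of_nonneg_of_le (fun j => sq_nonneg _) (fun j => hpt k j) (hsl.1 k)
set_option maxHeartbeats 1000000 in
lemma stepA (m : ℕ) (hm : 1 ≤ m) (α : ℝ) (hα0 : 0 ≤ α) (hα1 : α ≤ 1)
    (u c : ℤ → ℂ) (k : ℤ) :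
    (1 + |(k:ℝ)|) ^ (2 * (m:ℝ) * (2 - α)) * ‖u k‖ ^ 2
      ≤ 3 * ((2:ℝ) ^ (2 * m)) ^ 2 *
        (((1 + |(k:ℝ)|) ^ (2 * (m:ℝ)) * ‖u k‖ ^ 2 +
          ‖(|(k:ℝ)| ^ (2 * m) : ℝ) * u k + c k‖ ^ 2) +
         (1 + |(k:ℝ)|) ^ (-(2 * (m:ℝ) * α)) * ‖c k‖ ^ 2) := by
  set X : ℝ := 1 + |(k:ℝ)| with hXdef
  have hX : 0 < X := L_pos k
  set C : ℝ := (2:ℝ) ^ (2 * m) with hCdef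
  have hC : 0 ≤ C := by positivity
  set a : ℝ := ‖u k‖ with ha
  set r : ℝ := |(k:ℝ)| ^ (2 * m) with hr
  set b : ℝ := ‖(r : ℂ) * u k + c k‖ with hb
  set c' : ℝ := ‖c k‖ with hc'
  have ha0 : 0 ≤ a := norm_nonneg _
  have hb0 : 0 ≤ b := norm_nonneg _
  have hc0 : 0 ≤ c' := norm_nonneg _
  have hXe : X ^ (-(2 * (m:ℝ) * α)) * X ^ (2 * (2 * (m:ℝ))) = X ^ (2 * (m:ℝ) * (2 - α)) := by
    rw [← Real.rpow_add hX]; congr 1; ring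
  have h2 : X ^ (2 * (m:ℝ) * (2 - α)) * a ^ 2
      = X ^ (-(2 * (m:ℝ) * α)) * (X ^ (2 * (m:ℝ)) * a) ^ 2 := by
    rw [mul_pow, sq_rpow _ hX, ← hXe]; ring
  have hXn : X ^ (2 * (m:ℝ)) = X ^ (2 * m : ℕ) := by
    rw [← Real.rpow_natCast X (2 * m)]; norm_num
  have hpow : X ^ (2 * m : ℕ) ≤ C * (1 + r) := one_add_pow_le |(k:ℝ)| (abs_nonneg _) (2 * m)
  have hra : r * a ≤ b + c' := by
    have hid : (r : ℂ) * u k = ((r : ℂ) * u k + c k) - c k := by ring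
    have hr0 : 0 ≤ r := by positivity
    calc r * a = ‖(r : ℂ) * u k‖ := by
          rw [norm_mul, Complex.norm_real, Real.norm_of_nonneg hr0]
      _ = ‖((r : ℂ) * u k + c k) - c k‖ := by rw [← hid]
      _ ≤ b + c' := norm_sub_le _ _
  have h3 : X ^ (2 * (m:ℝ)) * a ≤ C * (a + (b + c')) := by
    calc X ^ (2 * (m:ℝ)) * a = X ^ (2 * m : ℕ) * a := by rw [hXn]
      _ ≤ (C * (1 + r)) * a := mul_le_mul_of_nonneg_right hpow ha0
      _ = C * (a + r * a) := by ring
      _ ≤ C * (a + (b + c')) := mul_le_mul_of_nonneg_left (by linarith) hC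
  have hW : 0 ≤ X ^ (-(2 * (m:ℝ) * α)) := Real.rpow_nonneg hX.le _
  have h4 : (X ^ (2 * (m:ℝ)) * a) ^ 2 ≤ (C * (a + (b + c'))) ^ 2 :=
    pow_le_pow_left₀ (by positivity) h3 2
  have h5 : X ^ (-(2 * (m:ℝ) * α)) ≤ 1 :=
    Real.rpow_le_one_of_one_le_of_nonpos (one_le_L k) (neg_nonpos.mpr (by positivity))
  have h6 : (1:ℝ) ≤ X ^ (2 * (m:ℝ)) :=
    Real.one_le_rpow (one_le_L k) (by positivity)
  calc X ^ (2 * (m:ℝ) * (2 - α)) * a ^ 2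
      = X ^ (-(2 * (m:ℝ) * α)) * (X ^ (2 * (m:ℝ)) * a) ^ 2 := h2
    _ ≤ X ^ (-(2 * (m:ℝ) * α)) * (C * (a + (b + c'))) ^ 2 :=
        mul_le_mul_of_nonneg_left h4 hW
    _ ≤ X ^ (-(2 * (m:ℝ) * α)) * (C ^ 2 * (3 * (a ^ 2 + b ^ 2 + c' ^ 2))) := by
        refine mul_le_mul_of_nonneg_left ?_ hW
        nlinarith [sq_nonneg (a - b), sq_nonneg (a - c'), sq_nonneg (b - c'), sq_nonneg C]
    _ = 3 * C ^ 2 * (X ^ (-(2 * (m:ℝ) * α)) * a ^ 2 + X ^ (-(2 * (m:ℝ) * α)) * b ^ 2 +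
          X ^ (-(2 * (m:ℝ) * α)) * c' ^ 2) := by ring
    _ ≤ 3 * C ^ 2 * ((X ^ (2 * (m:ℝ)) * a ^ 2 + b ^ 2) + X ^ (-(2 * (m:ℝ) * α)) * c' ^ 2) := by
        have t1 : X ^ (-(2 * (m:ℝ) * α)) * a ^ 2 ≤ X ^ (2 * (m:ℝ)) * a ^ 2 :=
          mul_le_mul_of_nonneg_right (h5.trans h6) (sq_nonneg a)
        have t2 : X ^ (-(2 * (m:ℝ) * α)) * b ^ 2 ≤ b ^ 2 := by
          nlinarith [sq_nonneg b]
        have hC2 : (0:ℝ) ≤ 3 * C ^ 2 := by positivity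
        exact mul_le_mul_of_nonneg_left (by linarith) hC2

end RegAux

theorem regularity_seq (m : ℕ) (hm : 1 ≤ m) (α : ℝ) (hα0 : 0 ≤ α) (hα1 : α ≤ 1)
    (V u : ℤ → ℂ)
    (hV : Summable fun k : ℤ => ((1 + |k| : ℝ)) ^ (-(2 * m * α)) * ‖V k‖ ^ 2)
    (hu : Summable fun k : ℤ => ((1 + |k| : ℝ)) ^ (2 * m : ℝ) * ‖u k‖ ^ 2)
    (hw : Summable fun k : ℤ =>
      ‖(|(k : ℝ)| ^ (2 * m) : ℝ) * u k + conv V u k‖ ^ 2) :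
    Summable fun k : ℤ => ((1 + |k| : ℝ)) ^ (2 * m * (2 - α)) * ‖u k‖ ^ 2 := by
  simp only [Int.cast_abs] at hV hu ⊢
  have hA : Summable fun i : ℤ => RegAux.Aa m α V i ^ 2 := by
    refine hV.congr fun i => ?_
    unfold RegAux.Aa
    rw [mul_pow, RegAux.sq_rpow _ (RegAux.L_pos i),
      show (2:ℝ) * -((m:ℝ) * α) = -(2 * (m:ℝ) * α) by ring]
  have hB : Summable fun j : ℤ => RegAux.Bb m u j ^ 2 := by
    refine hu.congr fun j => ?_
    unfold RegAux.Bb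
    rw [mul_pow, RegAux.sq_rpow _ (RegAux.L_pos j)]
  have hconvsum : Summable fun k : ℤ =>
      (1 + |(k:ℝ)|) ^ (-(2 * (m:ℝ) * α)) * ‖conv V u k‖ ^ 2 := by
    refine Summable.of_nonneg_of_le (fun k => by positivity)
      (fun k => RegAux.conv_bound m hm α hα0 hα1 V u hA hB k)
      ((RegAux.summable_F m hm α hα0 hα1 V hA).mul_right (∑' j : ℤ, RegAux.Bb m u j ^ 2))
  refine Summable.of_nonneg_of_le (fun k => by positivity)
    (fun k => RegAux.stepA m hm α hα0 hα1 u (conv V u) k)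
    (((hu.add hw).add hconvsum).mul_left (3 * ((2:ℝ) ^ (2 * m)) ^ 2))
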